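/- Let π be a finite group and H = {H_α}_{α∈π} a Hopf π-coalgebra over k. Then the direct sum H̃ = ⊕_{α∈π} H_α, with multiplication defined by m̃|_{H_α ⊗ H_β} = δ_{α,β} m_α, unit 1̃ = Σ_α 1_α, comultiplication Δ̃|_{H_α} = Σ_{βγ=α} Δ_{β,γ}, counit ε̃|_{H_α} = δ_{α,1} ε, and antipode S̃ = Σ_α S_α, is a Hopf algebra over k. -/

import Mathlib

set_option linter.unusedSectionVars false
set_option maxHeartbeats 2000000
set_option synthInstance.maxHeartbeats 400000


open TensorProduct

/-- The canonical `k`-linear isomorphism-as-map `H α →ₗ[k] H β` induced by an equality `α = β`. -/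
def Lcast (k : Type*) [CommSemiring k] {π : Type*} (H : π → Type*)
    [∀ α, AddCommMonoid (H α)] [∀ α, Module k (H α)] {α β : π} (h : α = β) :
    H α →ₗ[k] H β := by subst h; exact LinearMap.id

/-- A Hopf `π`-coalgebra over a field `k` (Turaev): a family of `k`-algebras `H α`
with comultiplication `Δ α β : H (α * β) →ₐ[k] H α ⊗[k] H β`, counit `ε : H 1 →ₐ[k] k`
and antipode `S α : H α →ₗ[k] H α⁻¹`, satisfying coassociativity, counit and
antipode axioms. -/
structure HopfGroupCoalgebra (k : Type*) [Field k] (π : Type*) [Group π]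
    (H : π → Type*) [∀ α, Ring (H α)] [∀ α, Algebra k (H α)] where
  Δ : ∀ α β : π, H (α * β) →ₐ[k] TensorProduct k (H α) (H β)
  ε : H (1 : π) →ₐ[k] k
  S : ∀ α : π, H α →ₗ[k] H α⁻¹
  coassoc : ∀ (α β γ : π) (x : H (α * β * γ)),
    (TensorProduct.assoc k (H α) (H β) (H γ))
        (TensorProduct.map (Δ α β).toLinearMap LinearMap.id (Δ (α * β) γ x)) =
      TensorProduct.map LinearMap.id (Δ β γ).toLinearMap
        (Δ α (β * γ) (Lcast k H (mul_assoc α β γ) x))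
  counit_right : ∀ (α : π) (x : H (α * 1)),
    (TensorProduct.rid k (H α))
        (TensorProduct.map LinearMap.id ε.toLinearMap (Δ α 1 x)) =
      Lcast k H (mul_one α) x
  counit_left : ∀ (α : π) (x : H (1 * α)),
    (TensorProduct.lid k (H α))
        (TensorProduct.map ε.toLinearMap LinearMap.id (Δ 1 α x)) =
      Lcast k H (one_mul α) x
  antipode_left : ∀ (α : π) (x : H (α⁻¹ * α)),
    (LinearMap.mul' k (H α))
        (TensorProduct.map ((Lcast k H (inv_inv α)).comp (S α⁻¹)) LinearMap.id (Δ α⁻¹ α x)) =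
      ε (Lcast k H (inv_mul_cancel α) x) • (1 : H α)
  antipode_right : ∀ (α : π) (x : H (α * α⁻¹)),
    (LinearMap.mul' k (H α))
        (TensorProduct.map LinearMap.id ((Lcast k H (inv_inv α)).comp (S α⁻¹)) (Δ α α⁻¹ x)) =
      ε (Lcast k H (mul_inv_cancel α) x) • (1 : H α)

namespace DirectSumHopfAux

section aux
variable (k : Type*) [Field k] {π : Type*} [Group π] [Fintype π] [DecidableEq π]
  (H : π → Type*) [∀ α, Ring (H α)] [∀ α, Algebra k (H α)]

@[simp] lemma Lcast_rfl (α : π) : Lcast k H (rfl : α = α) = LinearMap.id := rfl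

@[simp] lemma Lcast_self {α : π} (h : α = α) (x : H α) : Lcast k H h x = x := rfl

lemma Lcast_pi {α β : π} (h : α = β) (a : ∀ γ, H γ) : Lcast k H h (a α) = a β := by
  subst h; rfl

lemma Lcast_trans {α β γ : π} (h1 : α = β) (h2 : β = γ) (x : H α) :
    Lcast k H h2 (Lcast k H h1 x) = Lcast k H (h1.trans h2) x := by subst h1; subst h2; rfl

lemma single_apply_eq {α β : π} (h : α = β) (x : H α) :
    Pi.single (M := H) α x β = Lcast k H h x := by subst h; simp

lemma proj_single_eq {α β : π} (h : α = β) :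
    (LinearMap.proj (R := k) (φ := H) β).comp (LinearMap.single k H α) = Lcast k H h := by
  subst h; ext x; simp

lemma proj_single_ne {α β : π} (h : α ≠ β) :
    (LinearMap.proj (R := k) (φ := H) β).comp (LinearMap.single k H α) = 0 := by
  ext x; simp [Pi.single_eq_of_ne (Ne.symm h)]

variable {A B C A' B' C' : Type*} [AddCommMonoid A] [Module k A] [AddCommMonoid B] [Module k B]
  [AddCommMonoid C] [Module k C] [AddCommMonoid A'] [Module k A'] [AddCommMonoid B'] [Module k B']
  [AddCommMonoid C'] [Module k C']

lemma map_sum_left {ι : Type*} (s : Finset ι) (f : ι → (A →ₗ[k] B)) (g : A' →ₗ[k] B') :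
    TensorProduct.map (∑ i ∈ s, f i) g = ∑ i ∈ s, TensorProduct.map (f i) g := by
  rw [← TensorProduct.mapBilinear_apply, map_sum, LinearMap.sum_apply]
  simp [TensorProduct.mapBilinear_apply]

lemma map_sum_right {ι : Type*} (s : Finset ι) (f : A →ₗ[k] B) (g : ι → (A' →ₗ[k] B')) :
    TensorProduct.map f (∑ i ∈ s, g i) = ∑ i ∈ s, TensorProduct.map f (g i) := by
  rw [← TensorProduct.mapBilinear_apply, map_sum]
  simp [TensorProduct.mapBilinear_apply]

lemma mapmap (f : B →ₗ[k] C) (g : B' →ₗ[k] C') (f' : A →ₗ[k] B) (g' : A' →ₗ[k] B')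
    (t : TensorProduct k A A') :
    TensorProduct.map f g (TensorProduct.map f' g' t) =
      TensorProduct.map (f ∘ₗ f') (g ∘ₗ g') t := by
  rw [← LinearMap.comp_apply, ← TensorProduct.map_comp]

lemma map_left_apply (f : B →ₗ[k] C) (g : A →ₗ[k] B) (h : A' →ₗ[k] B') (t : TensorProduct k A A') :
    TensorProduct.map (f ∘ₗ g) h t = TensorProduct.map f h (TensorProduct.map g LinearMap.id t) := by
  rw [← LinearMap.comp_apply, ← TensorProduct.map_comp, LinearMap.comp_id]

lemma map_right_apply (f : A' →ₗ[k] B') (g : B →ₗ[k] C) (h : A →ₗ[k] B) (t : TensorProduct k A' A) :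
    TensorProduct.map f (g ∘ₗ h) t = TensorProduct.map f g (TensorProduct.map LinearMap.id h t) := by
  rw [← LinearMap.comp_apply, ← TensorProduct.map_comp, LinearMap.comp_id]

lemma rid_map_eq (f : A →ₗ[k] B) (g : A' →ₗ[k] k) (t : TensorProduct k A A') :
    TensorProduct.rid k B (TensorProduct.map f g t) =
      f (TensorProduct.rid k A (TensorProduct.map LinearMap.id g t)) := by
  induction t using TensorProduct.induction_on with
  | zero => simp
  | tmul x y => simp [TensorProduct.smul_tmul']
  | add u v hu hv => simp [hu, hv, map_add]

lemma lid_map_eq (f : A →ₗ[k] B) (g : A' →ₗ[k] k) (t : TensorProduct k A' A) :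
    TensorProduct.lid k B (TensorProduct.map g f t) =
      f (TensorProduct.lid k A (TensorProduct.map g LinearMap.id t)) := by
  induction t using TensorProduct.induction_on with
  | zero => simp
  | tmul x y => simp
  | add u v hu hv => simp [hu, hv, map_add]

lemma mapsingle_mul_eq (α β : π) (u v : TensorProduct k (H α) (H β)) :
    (TensorProduct.map (LinearMap.single k H α) (LinearMap.single k H β) u) *
      (TensorProduct.map (LinearMap.single k H α) (LinearMap.single k H β) v) =
    TensorProduct.map (LinearMap.single k H α) (LinearMap.single k H β) (u * v) := by
  induction u using TensorProduct.induction_on with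
  | zero => simp
  | add u1 u2 h1 h2 => rw [map_add, add_mul, h1, h2, add_mul, map_add]
  | tmul x y =>
    induction v using TensorProduct.induction_on with
    | zero => simp
    | add v1 v2 h1 h2 => rw [map_add, mul_add, h1, h2, mul_add, map_add]
    | tmul x' y' =>
      simp only [TensorProduct.map_tmul, Algebra.TensorProduct.tmul_mul_tmul,
        LinearMap.single_apply]
      rw [← Pi.single_mul, ← Pi.single_mul]

lemma mapsingle_mul_ne {α β α' β' : π} (h : α ≠ α' ∨ β ≠ β')
    (u : TensorProduct k (H α) (H β)) (v : TensorProduct k (H α') (H β')) :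
    (TensorProduct.map (LinearMap.single k H α) (LinearMap.single k H β) u) *
      (TensorProduct.map (LinearMap.single k H α') (LinearMap.single k H β') v) = 0 := by
  induction u using TensorProduct.induction_on with
  | zero => simp
  | add u1 u2 h1 h2 => rw [map_add, add_mul, h1, h2, add_zero]
  | tmul x y =>
    induction v using TensorProduct.induction_on with
    | zero => simp
    | add v1 v2 h1 h2 => rw [map_add, mul_add, h1, h2, add_zero]
    | tmul x' y' =>
      simp only [TensorProduct.map_tmul, Algebra.TensorProduct.tmul_mul_tmul,
        LinearMap.single_apply]
      rcases h with h | h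
      · have : (Pi.single (M := H) α x) * Pi.single α' x' = 0 := by
          funext γ
          rcases eq_or_ne α γ with rfl | hne
          · simp [Pi.mul_apply, Pi.single_eq_same, Pi.single_eq_of_ne h]
          · simp [Pi.mul_apply, Pi.single_eq_of_ne (Ne.symm hne)]
        rw [this, TensorProduct.zero_tmul]
      · have : (Pi.single (M := H) β y) * Pi.single β' y' = 0 := by
          funext γ
          rcases eq_or_ne β γ with rfl | hne
          · simp [Pi.mul_apply, Pi.single_eq_same, Pi.single_eq_of_ne h]
          · simp [Pi.mul_apply, Pi.single_eq_of_ne (Ne.symm hne)]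
        rw [this, TensorProduct.tmul_zero]

lemma mul'_map_single_right {α β : π} (g : B →ₗ[k] H β) (t : TensorProduct k (H α) B) :
    LinearMap.mul' k (∀ γ, H γ)
        (TensorProduct.map (LinearMap.single k H α) ((LinearMap.single k H β).comp g) t) =
      if h : α = β then
        Pi.single α (LinearMap.mul' k (H α)
          (TensorProduct.map LinearMap.id ((Lcast k H h.symm).comp g) t))
      else 0 := by
  induction t using TensorProduct.induction_on with
  | zero => split <;> simp
  | add u v hu hv =>
    rw [map_add, map_add, hu, hv]
    split <;> simp [map_add, Pi.single_add]
  | tmul x y =>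
    simp only [TensorProduct.map_tmul, LinearMap.mul'_apply, LinearMap.comp_apply,
      LinearMap.single_apply, LinearMap.id_apply]
    split
    · next h =>
      subst h
      funext γ
      rcases eq_or_ne α γ with rfl | hne
      · simp [Pi.mul_apply, Pi.single_eq_same]
      · simp [Pi.mul_apply, Pi.single_eq_of_ne (Ne.symm hne)]
    · next h =>
      funext γ
      rcases eq_or_ne α γ with rfl | hne
      · simp [Pi.mul_apply, Pi.single_eq_same, Pi.single_eq_of_ne h]
      · simp [Pi.mul_apply, Pi.single_eq_of_ne (Ne.symm hne)]

lemma mul'_map_single_left {α β : π} (f : A →ₗ[k] H α) (t : TensorProduct k A (H β)) :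
    LinearMap.mul' k (∀ γ, H γ)
        (TensorProduct.map ((LinearMap.single k H α).comp f) (LinearMap.single k H β) t) =
      if h : α = β then
        Pi.single α (LinearMap.mul' k (H α)
          (TensorProduct.map f (Lcast k H h.symm) t))
      else 0 := by
  induction t using TensorProduct.induction_on with
  | zero => split <;> simp
  | add u v hu hv =>
    rw [map_add, map_add, hu, hv]
    split <;> simp [map_add, Pi.single_add]
  | tmul x y =>
    simp only [TensorProduct.map_tmul, LinearMap.mul'_apply, LinearMap.comp_apply,
      LinearMap.single_apply, LinearMap.id_apply]
    split
    · next h =>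
      subst h
      funext γ
      rcases eq_or_ne α γ with rfl | hne
      · simp [Pi.mul_apply, Pi.single_eq_same]
      · simp [Pi.mul_apply, Pi.single_eq_of_ne (Ne.symm hne)]
    · next h =>
      funext γ
      rcases eq_or_ne α γ with rfl | hne
      · simp [Pi.mul_apply, Pi.single_eq_same, Pi.single_eq_of_ne h]
      · simp [Pi.mul_apply, Pi.single_eq_of_ne (Ne.symm hne)]

lemma one_eq_sum_single : (1 : ∀ γ, H γ) = ∑ β : π, Pi.single (M := H) β 1 := by
  have := (Finset.univ_sum_single (1 : ∀ γ, H γ)).symm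
  simpa using this

end aux

section hc
variable {k : Type*} [Field k] {π : Type*} [Group π] [Fintype π] [DecidableEq π]
  {H : π → Type*} [∀ α, Ring (H α)] [∀ α, Algebra k (H α)] (Hc : HopfGroupCoalgebra k π H)

lemma map_Lcast_Δ_left {u u' v : π} (h1 : u = u') (h3 : u * v = u' * v) (z : H (u * v)) :
    TensorProduct.map (Lcast k H h1) LinearMap.id (Hc.Δ u v z) =
      Hc.Δ u' v (Lcast k H h3 z) := by
  subst h1; simp [TensorProduct.map_id]

lemma map_Lcast_Δ_right {u v v' : π} (h1 : v = v') (h3 : u * v = u * v') (z : H (u * v)) :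
    TensorProduct.map LinearMap.id (Lcast k H h1) (Hc.Δ u v z) =
      Hc.Δ u v' (Lcast k H h3 z) := by
  subst h1; simp [TensorProduct.map_id]

lemma Lcast_S {α β : π} (h : α = β) (h' : α⁻¹ = β⁻¹) (x : H α) :
    Hc.S β (Lcast k H h x) = Lcast k H h' (Hc.S α x) := by subst h; rfl

lemma antipode_left' (β : π) (x : H (β * β⁻¹)) :
    LinearMap.mul' k (H β⁻¹)
        (TensorProduct.map (Hc.S β) LinearMap.id (Hc.Δ β β⁻¹ x)) =
      Hc.ε (Lcast k H (mul_inv_cancel β) x) • 1 := by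
  have h1 : β = β⁻¹⁻¹ := (inv_inv β).symm
  have h3 : β * β⁻¹ = β⁻¹⁻¹ * β⁻¹ := by rw [inv_inv]
  have key := Hc.antipode_left β⁻¹ (Lcast k H h3 x)
  rw [← map_Lcast_Δ_left Hc h1 h3 x] at key
  rw [← map_left_apply] at key
  have hS : ((Lcast k H (inv_inv β⁻¹)).comp (Hc.S β⁻¹⁻¹)).comp (Lcast k H h1) = Hc.S β := by
    ext z
    simp only [LinearMap.comp_apply]
    rw [Lcast_S Hc h1 (congrArg Inv.inv h1) z, Lcast_trans]
    exact Lcast_self _ _ _ _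
  rw [hS] at key
  rw [key, Lcast_trans]

/-- The comultiplication on `∏ α, H α`. -/
noncomputable def comulMap : (∀ α, H α) →ₗ[k] TensorProduct k (∀ α, H α) (∀ α, H α) :=
  ∑ p : π × π, (TensorProduct.map (LinearMap.single k H p.1) (LinearMap.single k H p.2)) ∘ₗ
      ((Hc.Δ p.1 p.2).toLinearMap ∘ₗ (LinearMap.proj (p.1 * p.2)))

/-- The counit on `∏ α, H α`. -/
noncomputable def counitMap : (∀ α, H α) →ₗ[k] k :=
  Hc.ε.toLinearMap ∘ₗ (LinearMap.proj (1 : π))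

/-- The antipode on `∏ α, H α`. -/
noncomputable def antipodeMap : (∀ α, H α) →ₗ[k] (∀ α, H α) :=
  ∑ β : π, (LinearMap.single k H β⁻¹) ∘ₗ ((Hc.S β) ∘ₗ (LinearMap.proj β))

lemma comulMap_apply (a : ∀ α, H α) :
    comulMap Hc a = ∑ p : π × π,
      TensorProduct.map (LinearMap.single k H p.1) (LinearMap.single k H p.2)
        (Hc.Δ p.1 p.2 (a (p.1 * p.2))) := by
  simp [comulMap, LinearMap.sum_apply]

lemma comulMap_apply₂ (a : ∀ α, H α) :
    comulMap Hc a = ∑ β : π, ∑ γ : π,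
      TensorProduct.map (LinearMap.single k H β) (LinearMap.single k H γ)
        (Hc.Δ β γ (a (β * γ))) := by
  rw [comulMap_apply, Fintype.sum_prod_type]

lemma counitMap_apply (a : ∀ α, H α) : counitMap Hc a = Hc.ε (a 1) := rfl

lemma comulMap_single (α : π) (x : H α) :
    comulMap Hc (Pi.single α x) = ∑ β : π,
      TensorProduct.map (LinearMap.single k H β) (LinearMap.single k H (β⁻¹ * α))
        (Hc.Δ β (β⁻¹ * α) (Pi.single (M := H) α x (β * (β⁻¹ * α)))) := by
  rw [comulMap_apply₂]
  refine Finset.sum_congr rfl fun β _ => ?_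
  refine Finset.sum_eq_single (β⁻¹ * α) (fun γ _ hγ => ?_)
    (fun h => absurd (Finset.mem_univ _) h)
  have hz : Pi.single (M := H) α x (β * γ) = 0 :=
    Pi.single_eq_of_ne (fun hh => hγ (by rw [← hh, inv_mul_cancel_left])) x
  rw [hz, map_zero, map_zero]

lemma comulMap_comp_single (β : π) :
    (comulMap Hc) ∘ₗ (LinearMap.single k H β) = ∑ δ : π,
      (TensorProduct.map (LinearMap.single k H δ) (LinearMap.single k H (δ⁻¹ * β))) ∘ₗ
        ((Hc.Δ δ (δ⁻¹ * β)).toLinearMap ∘ₗ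
          ((LinearMap.proj (δ * (δ⁻¹ * β))).comp (LinearMap.single k H β))) := by
  ext x
  rw [LinearMap.comp_apply, LinearMap.single_apply, comulMap_single, LinearMap.sum_apply]
  rfl

lemma antipodeMap_single (α : π) (x : H α) :
    antipodeMap Hc (Pi.single α x) = Pi.single α⁻¹ (Hc.S α x) := by
  rw [antipodeMap, LinearMap.sum_apply]
  rw [Finset.sum_eq_single α (fun β _ hβ => ?_) (fun h => absurd (Finset.mem_univ _) h)]
  · simp
  · simp [Pi.single_eq_of_ne hβ]

lemma antipodeMap_comp_single (γ : π) :
    (antipodeMap Hc) ∘ₗ (LinearMap.single k H γ) = (LinearMap.single k H γ⁻¹) ∘ₗ (Hc.S γ) := by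
  ext x
  simp [antipodeMap_single]

/-- Auxiliary triple-indexed summand used in the coassociativity proof. -/
noncomputable def Gmap (α : π) (x : H α) (u v w : π) :
    TensorProduct k (∀ γ, H γ) (TensorProduct k (∀ γ, H γ) (∀ γ, H γ)) :=
  TensorProduct.map (LinearMap.single k H u)
    (TensorProduct.map (LinearMap.single k H v) (LinearMap.single k H w))
    (TensorProduct.map LinearMap.id (Hc.Δ v w).toLinearMap
      (Hc.Δ u (v * w) (Pi.single (M := H) α x (u * (v * w)))))

lemma coassoc_single (α : π) (x : H α) :
    (TensorProduct.assoc k (∀ γ, H γ) (∀ γ, H γ) (∀ γ, H γ))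
        (TensorProduct.map (comulMap Hc) LinearMap.id (comulMap Hc (Pi.single α x))) =
      TensorProduct.map LinearMap.id (comulMap Hc) (comulMap Hc (Pi.single α x)) := by
  have hL : (TensorProduct.assoc k (∀ γ, H γ) (∀ γ, H γ) (∀ γ, H γ))
        (TensorProduct.map (comulMap Hc) LinearMap.id (comulMap Hc (Pi.single α x))) =
      ∑ β : π, ∑ δ : π, Gmap Hc α x δ (δ⁻¹ * β) (β⁻¹ * α) := by
    rw [comulMap_single, map_sum, map_sum]
    refine Finset.sum_congr rfl fun β _ => ?_
    rw [mapmap, LinearMap.id_comp, comulMap_comp_single, map_sum_left, LinearMap.sum_apply,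
      map_sum]
    refine Finset.sum_congr rfl fun δ _ => ?_
    rw [map_left_apply, map_left_apply]
    rw [proj_single_eq k H (show β = δ * (δ⁻¹ * β) from (mul_inv_cancel_left δ β).symm)]
    rw [map_Lcast_Δ_left Hc (show β = δ * (δ⁻¹ * β) from (mul_inv_cancel_left δ β).symm)
      (show β * (β⁻¹ * α) = (δ * (δ⁻¹ * β)) * (β⁻¹ * α) from by group)]
    rw [Lcast_pi k H _ (Pi.single α x)]
    rw [← TensorProduct.map_map_assoc]
    rw [Hc.coassoc δ (δ⁻¹ * β) (β⁻¹ * α) (Pi.single (M := H) α x _)]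
    rw [Lcast_pi k H _ (Pi.single α x)]
    rfl
  have hR : TensorProduct.map LinearMap.id (comulMap Hc) (comulMap Hc (Pi.single α x)) =
      ∑ β : π, ∑ γ : π, Gmap Hc α x β γ (γ⁻¹ * (β⁻¹ * α)) := by
    rw [comulMap_single, map_sum]
    refine Finset.sum_congr rfl fun β _ => ?_
    rw [mapmap, LinearMap.id_comp, comulMap_comp_single, map_sum_right, LinearMap.sum_apply]
    refine Finset.sum_congr rfl fun γ _ => ?_
    rw [map_right_apply, map_right_apply]
    rw [proj_single_eq k H
      (show (β⁻¹ * α) = γ * (γ⁻¹ * (β⁻¹ * α)) from (mul_inv_cancel_left γ (β⁻¹ * α)).symm)]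
    rw [map_Lcast_Δ_right Hc _
      (show β * (β⁻¹ * α) = β * (γ * (γ⁻¹ * (β⁻¹ * α))) from by group)]
    rw [Lcast_pi k H _ (Pi.single α x)]
    rfl
  rw [hL, hR]
  calc (∑ β : π, ∑ δ : π, Gmap Hc α x δ (δ⁻¹ * β) (β⁻¹ * α))
      = ∑ p : π × π, Gmap Hc α x p.2 (p.2⁻¹ * p.1) (p.1⁻¹ * α) :=
        (Fintype.sum_prod_type
          (f := fun p : π × π => Gmap Hc α x p.2 (p.2⁻¹ * p.1) (p.1⁻¹ * α))).symm
    _ = ∑ p : π × π, Gmap Hc α x p.1 p.2 (p.2⁻¹ * (p.1⁻¹ * α)) :=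
        Fintype.sum_equiv
          ⟨fun p => (p.2, p.2⁻¹ * p.1), fun q => (q.1 * q.2, q.1),
            fun p => by simp, fun q => by simp⟩ _ _ (fun p => by
          show Gmap Hc α x p.2 (p.2⁻¹ * p.1) (p.1⁻¹ * α) =
            Gmap Hc α x p.2 (p.2⁻¹ * p.1) ((p.2⁻¹ * p.1)⁻¹ * (p.2⁻¹ * α))
          exact congrArg (Gmap Hc α x p.2 (p.2⁻¹ * p.1)) (by group))
    _ = ∑ β : π, ∑ γ : π, Gmap Hc α x β γ (γ⁻¹ * (β⁻¹ * α)) :=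
        Fintype.sum_prod_type
          (f := fun p : π × π => Gmap Hc α x p.1 p.2 (p.2⁻¹ * (p.1⁻¹ * α)))

lemma counit_comp_single_one :
    (counitMap Hc) ∘ₗ (LinearMap.single k H (1 : π)) = Hc.ε.toLinearMap := by
  rw [counitMap, LinearMap.comp_assoc, proj_single_eq k H rfl]
  rfl

lemma counit_comp_single_ne {β : π} (h : β ≠ 1) :
    (counitMap Hc) ∘ₗ (LinearMap.single k H β) = 0 := by
  rw [counitMap, LinearMap.comp_assoc, proj_single_ne k H h, LinearMap.comp_zero]

end hc

end DirectSumHopfAux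

open DirectSumHopfAux in
/-- For a finite group `π`, a Hopf `π`-coalgebra `H` gives rise to a Hopf algebra structure
on `H̃ = ⊕_α H α` (realized as `∀ α, H α` with the pointwise, i.e. block-diagonal
`m̃|_{H α ⊗ H β} = δ_{α β} m_α`, ring structure and unit `1̃ = ∑_α 1_α`): there are a
comultiplication, counit and antipode given on the summands by `Δ̃|_{H α} = ∑_{βγ = α} Δ β γ`,
`ε̃|_{H α} = δ_{α 1} ε` and `S̃|_{H α} = S α`, satisfying all the axioms of a Hopf algebra. -/
theorem directSum_hopfAlgebra (k : Type*) [Field k] (π : Type*) [Group π]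
    [Fintype π] [DecidableEq π]
    (H : π → Type*) [∀ α, Ring (H α)] [∀ α, Algebra k (H α)]
    (Hc : HopfGroupCoalgebra k π H) :
    ∃ (comul : (∀ α, H α) →ₗ[k] TensorProduct k (∀ α, H α) (∀ α, H α))
      (counit : (∀ α, H α) →ₗ[k] k) (antipode : (∀ α, H α) →ₗ[k] (∀ α, H α)),
      -- the structure maps are the ones prescribed by the Hopf `π`-coalgebra:
      (∀ (α : π) (x : H α),
        comul (Pi.single α x) =
          ∑ β : π, (TensorProduct.map (LinearMap.single k H β) (LinearMap.single k H (β⁻¹ * α)))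
            (Hc.Δ β (β⁻¹ * α) (Lcast k H (mul_inv_cancel_left β α).symm x))) ∧
      (∀ (α : π) (x : H α),
        counit (Pi.single α x) = if h : α = 1 then Hc.ε (Lcast k H h x) else 0) ∧
      (∀ (α : π) (x : H α), antipode (Pi.single α x) = Pi.single α⁻¹ (Hc.S α x)) ∧
      -- coassociativity and counit axioms:
      (∀ a : ∀ α, H α,
        (TensorProduct.assoc k _ _ _) (TensorProduct.map comul LinearMap.id (comul a)) =
          TensorProduct.map LinearMap.id comul (comul a)) ∧
      (∀ a : ∀ α, H α,
        (TensorProduct.lid k _) (TensorProduct.map counit LinearMap.id (comul a)) = a) ∧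
      (∀ a : ∀ α, H α,
        (TensorProduct.rid k _) (TensorProduct.map LinearMap.id counit (comul a)) = a) ∧
      -- the comultiplication and counit are algebra homomorphisms:
      (∀ a b : ∀ α, H α, comul (a * b) = comul a * comul b) ∧
      (comul 1 = 1) ∧
      (∀ a b : ∀ α, H α, counit (a * b) = counit a * counit b) ∧
      (counit 1 = 1) ∧
      -- the antipode axioms:
      (∀ a : ∀ α, H α,
        (LinearMap.mul' k _) (TensorProduct.map antipode LinearMap.id (comul a)) =
          counit a • (1 : ∀ α, H α)) ∧
      (∀ a : ∀ α, H α,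
        (LinearMap.mul' k _) (TensorProduct.map LinearMap.id antipode (comul a)) =
          counit a • (1 : ∀ α, H α)) := by
  refine ⟨comulMap Hc, counitMap Hc, antipodeMap Hc, ?_, ?_, ?_, ?_, ?_, ?_, ?_, ?_, ?_, ?_, ?_, ?_⟩
  · -- comul on singles
    intro α x
    rw [comulMap_single]
    refine Finset.sum_congr rfl fun β _ => ?_
    rw [single_apply_eq k H ((mul_inv_cancel_left β α).symm) x]
  · -- counit on singles
    intro α x
    rw [counitMap_apply]
    rcases eq_or_ne α 1 with rfl | h
    · rw [dif_pos rfl]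
      simp
    · rw [dif_neg h, Pi.single_eq_of_ne (Ne.symm h), map_zero]
  · -- antipode on singles
    intro α x
    exact antipodeMap_single Hc α x
  · -- coassociativity
    intro a
    rw [← Finset.univ_sum_single a]
    simp only [map_sum]
    exact Finset.sum_congr rfl fun i _ => coassoc_single Hc i (a i)
  · -- left counit
    intro a
    rw [comulMap_apply₂ Hc a]
    simp only [map_sum]
    refine (Finset.sum_eq_single (1 : π)
      (fun β _ hβ => Finset.sum_eq_zero fun γ _ => ?_)
      (fun h => absurd (Finset.mem_univ _) h)).trans ?_
    · rw [mapmap, LinearMap.id_comp, counit_comp_single_ne Hc hβ,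
        TensorProduct.map_zero_left, LinearMap.zero_apply, map_zero]
    · trans (∑ γ : π, (LinearMap.single k H γ) (a γ))
      · refine Finset.sum_congr rfl fun γ _ => ?_
        rw [mapmap, LinearMap.id_comp, counit_comp_single_one Hc, lid_map_eq,
          Hc.counit_left γ (a (1 * γ)), Lcast_pi k H (one_mul γ) a]
      · simp only [LinearMap.single_apply]
        exact Finset.univ_sum_single a
  · -- right counit
    intro a
    rw [comulMap_apply₂ Hc a]
    simp only [map_sum]
    trans (∑ β : π, (LinearMap.single k H β) (a β))
    · refine Finset.sum_congr rfl fun β _ => ?_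
      refine (Finset.sum_eq_single (1 : π) (fun γ _ hγ => ?_)
        (fun h => absurd (Finset.mem_univ _) h)).trans ?_
      · rw [mapmap, LinearMap.id_comp, counit_comp_single_ne Hc hγ,
          TensorProduct.map_zero_right, LinearMap.zero_apply, map_zero]
      · rw [mapmap, LinearMap.id_comp, counit_comp_single_one Hc, rid_map_eq,
          Hc.counit_right β (a (β * 1)), Lcast_pi k H (mul_one β) a]
    · simp only [LinearMap.single_apply]
      exact Finset.univ_sum_single a
  · -- comul multiplicative
    intro a b
    rw [comulMap_apply Hc a, comulMap_apply Hc b, comulMap_apply Hc (a * b),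
      Finset.sum_mul_sum]
    refine Finset.sum_congr rfl fun p _ => ?_
    refine Eq.symm ((Finset.sum_eq_single p (fun q _ hq => ?_)
      (fun h => absurd (Finset.mem_univ _) h)).trans ?_)
    · refine mapsingle_mul_ne k H ?_ _ _
      by_contra hcon
      push_neg at hcon
      exact hq (Prod.ext hcon.1.symm hcon.2.symm)
    · rw [mapsingle_mul_eq, ← map_mul]
      rfl
  · -- comul 1
    calc comulMap Hc 1
        = ∑ p : π × π, (Pi.single (M := H) p.1 1) ⊗ₜ[k] (Pi.single (M := H) p.2 1) := by
          rw [comulMap_apply]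
          refine Finset.sum_congr rfl fun p _ => ?_
          rw [show ((1 : ∀ γ, H γ) (p.1 * p.2)) = 1 from rfl, map_one,
            Algebra.TensorProduct.one_def, TensorProduct.map_tmul,
            LinearMap.single_apply, LinearMap.single_apply]
      _ = 1 := by
          rw [Fintype.sum_prod_type, Algebra.TensorProduct.one_def, one_eq_sum_single (H := H),
            TensorProduct.sum_tmul]
          refine Finset.sum_congr rfl fun β _ => ?_
          show (∑ y : π, (Pi.single (M := H) β (1 : H β)) ⊗ₜ[k] (Pi.single (M := H) y (1 : H y)))
            = (Pi.single (M := H) β (1 : H β)) ⊗ₜ[k] ∑ γ : π, Pi.single (M := H) γ (1 : H γ)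
          exact (TensorProduct.tmul_sum _ _ _).symm
  · -- counit multiplicative
    intro a b
    simp [counitMap_apply, Pi.mul_apply, map_mul]
  · -- counit 1
    simp [counitMap_apply]
  · -- left antipode
    intro a
    rw [comulMap_apply₂ Hc a]
    simp only [map_sum]
    trans (∑ β : π, (counitMap Hc a) • Pi.single (M := H) β⁻¹ (1 : H β⁻¹))
    · refine Finset.sum_congr rfl fun β _ => ?_
      refine (Finset.sum_eq_single β⁻¹ (fun γ _ hγ => ?_)
        (fun h => absurd (Finset.mem_univ _) h)).trans ?_
      · rw [mapmap, LinearMap.id_comp, antipodeMap_comp_single, mul'_map_single_left,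
          dif_neg (fun hh => hγ hh.symm)]
      · rw [mapmap, LinearMap.id_comp, antipodeMap_comp_single, mul'_map_single_left,
          dif_pos rfl]
        rw [show Lcast k H (Eq.symm (rfl : β⁻¹ = β⁻¹)) = (LinearMap.id : H β⁻¹ →ₗ[k] H β⁻¹)
          from rfl]
        rw [antipode_left' Hc β (a (β * β⁻¹)), Lcast_pi k H (mul_inv_cancel β) a,
          Pi.single_smul]
        rfl
    · rw [← Finset.smul_sum]
      have h1 : ∑ β : π, Pi.single (M := H) β⁻¹ (1 : H β⁻¹) = 1 := by
        rw [one_eq_sum_single (H := H)]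
        exact Fintype.sum_equiv (Equiv.inv π) _ _ (fun β => rfl)
      rw [h1]
  · -- right antipode
    intro a
    rw [comulMap_apply₂ Hc a]
    simp only [map_sum]
    trans (∑ β : π, (counitMap Hc a) • Pi.single (M := H) β (1 : H β))
    · refine Finset.sum_congr rfl fun β _ => ?_
      refine (Finset.sum_eq_single β⁻¹ (fun γ _ hγ => ?_)
        (fun h => absurd (Finset.mem_univ _) h)).trans ?_
      · rw [mapmap, LinearMap.id_comp, antipodeMap_comp_single, mul'_map_single_right,
          dif_neg (fun hh => hγ (by rw [hh, inv_inv]))]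
      · rw [mapmap, LinearMap.id_comp, antipodeMap_comp_single, mul'_map_single_right,
          dif_pos (inv_inv β).symm]
        rw [show Lcast k H (Eq.symm (Eq.symm (inv_inv β))) = Lcast k H (inv_inv β) from rfl]
        rw [Hc.antipode_right β (a (β * β⁻¹)), Lcast_pi k H (mul_inv_cancel β) a,
          Pi.single_smul]
        rfl
    · rw [← Finset.smul_sum]
      have h1 : ∑ β : π, Pi.single (M := H) β (1 : H β) = 1 := (one_eq_sum_single (H := H)).symm
      rw [h1]
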